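/- If two vertices v1 and v2 of a directed acyclic graph are d-separated by a set Z ⊆ V \ {v1, v2}, then X_{v1} is conditionally independent of X_{v2} given X_Z in any probability distribution that factorizes according to the DAG. -/

import Mathlib

/-!
STATEMENT 2: If two vertices v1 and v2 of a DAG are d-separated by a set
Z ⊆ V \ {v1, v2}, then X_{v1} is conditionally independent of X_{v2} given X_Z
in any probability distribution that factorizes according to the DAG.

We work with finitely many variables, each taking values in a finite type, so
that densities are probability mass functions and "factorizes according to the
DAG" means the joint pmf is the product over vertices of conditional pmfs of
each variable given its parents.
-/

namespace Stmt2

variable {V : Type*}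

/-- Two vertices are linked in a path if there is a directed edge between them
in either direction. -/
def AdjUndir (E : V → V → Prop) (a b : V) : Prop := E a b ∨ E b a

/-- A path (represented as its list of vertices) is blocked by `Z` if it contains
a consecutive triple `a, m, b` such that either `m` is a non-collider
(chain `a → m → b`, chain `b → m → a`, or fork `a ← m → b`) belonging to `Z`,
or `m` is a collider (`a → m ← b`) such that neither `m` nor any of its
descendants is in `Z`. -/
def Blocked (E : V → V → Prop) (Z : Set V) (path : List V) : Prop :=
  ∃ (pre post : List V) (a m b : V), path = pre ++ a :: m :: b :: post ∧
    ((((E a m ∧ E m b) ∨ (E b m ∧ E m a) ∨ (E m a ∧ E m b)) ∧ m ∈ Z) ∨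
      ((E a m ∧ E b m) ∧ ∀ d, Relation.ReflTransGen E m d → d ∉ Z))

/-- `v1` and `v2` are d-separated by `Z`: every path (a duplicate-free list of
vertices, consecutive ones adjacent in the underlying undirected graph,
starting at `v1` and ending at `v2`) is blocked by `Z`. -/
def DSep (E : V → V → Prop) (Z : Set V) (v1 v2 : V) : Prop :=
  ∀ path : List V, path.Chain' (AdjUndir E) → path.Nodup →
    path.head? = some v1 → path.getLast? = some v2 → Blocked E Z path

section Comb

variable (E : V → V → Prop) (Z : Set V)

/-- vertices having a descendant (possibly itself) in `Z`. -/
def anZ : Set V := {v | ∃ d, Relation.ReflTransGen E v d ∧ d ∈ Z}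

/-- an "active" triple. -/
def TripleOK (a m b : V) : Prop :=
  (E a m ∧ E b m → m ∈ anZ E Z) ∧ (¬(E a m ∧ E b m) → m ∉ Z)

/-- an active walk: consecutive vertices adjacent, all triples active. -/
def AWalk (w : List V) : Prop :=
  w.Chain' (AdjUndir E) ∧
  ∀ i a m b, w[i]? = some a → w[i+1]? = some m → w[i+2]? = some b →
    TripleOK E Z a m b

variable {E Z}

lemma AWalk.infix {w w' : List V} (h : AWalk E Z w) (hin : w' <:+: w) : AWalk E Z w' := by
  obtain ⟨s, t, rfl⟩ := hin
  refine ⟨h.1.infix ⟨s, t, rfl⟩, ?_⟩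
  intro i a m b ha hm hb
  have hlen : i + 2 < w'.length := (List.getElem?_eq_some_iff.1 hb).1
  have hsw : (s ++ w').length = s.length + w'.length := by simp
  refine h.2 (s.length + i) a m b ?_ ?_ ?_
  · rw [List.getElem?_append_left (by omega), List.getElem?_append_right (by omega),
      show s.length + i - s.length = i by omega]; assumption
  · rw [show s.length + i + 1 = s.length + (i+1) by omega,
      List.getElem?_append_left (by omega), List.getElem?_append_right (by omega),
      show s.length + (i+1) - s.length = i + 1 by omega]; assumption
  · rw [show s.length + i + 2 = s.length + (i+2) by omega,
      List.getElem?_append_left (by omega), List.getElem?_append_right (by omega),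
      show s.length + (i+2) - s.length = i + 2 by omega]; assumption

lemma awalk_triple_of_decomp {w pre post : List V} {a m b : V} (h : AWalk E Z w)
    (hd : w = pre ++ a :: m :: b :: post) : TripleOK E Z a m b := by
  subst hd
  refine h.2 pre.length a m b ?_ ?_ ?_
  · rw [List.getElem?_append_right (le_refl _)]; simp
  · rw [List.getElem?_append_right (by omega)]
    rw [show pre.length + 1 - pre.length = 1 by omega]; simp
  · rw [List.getElem?_append_right (by omega)]
    rw [show pre.length + 2 - pre.length = 2 by omega]; simp

end Comb

section Comb2

variable {E : V → V → Prop} {Z : Set V}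

lemma chain'_getElem {R : V → V → Prop} {l : List V} (h : l.Chain' R) {i : ℕ} {a b : V}
    (ha : l[i]? = some a) (hb : l[i+1]? = some b) : R a b := by
  obtain ⟨hia, rfl⟩ := List.getElem?_eq_some_iff.1 ha
  obtain ⟨hib, rfl⟩ := List.getElem?_eq_some_iff.1 hb
  exact List.isChain_iff_getElem.1 h i (by omega)

lemma AWalk.glue {l r : List V} {m : V} (h1 : AWalk E Z (l ++ [m])) (h2 : AWalk E Z (m :: r))
    (hj : ∀ a b, l.getLast? = some a → r.head? = some b → TripleOK E Z a m b) :
    AWalk E Z (l ++ m :: r) := by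
  have key : ∀ j ≤ l.length, (l ++ m :: r)[j]? = (l ++ [m])[j]? := by
    intro j hjle
    rcases lt_or_eq_of_le hjle with hlt | rfl
    · rw [List.getElem?_append_left hlt, List.getElem?_append_left hlt]
    · rw [List.getElem?_append_right le_rfl, List.getElem?_append_right le_rfl]
      simp
  constructor
  · show List.IsChain _ _; rw [List.isChain_append]
    have h1' := List.isChain_append.1 h1.1
    exact ⟨h1'.1, h2.1, by
      intro x hx y hy
      simp only [List.head?_cons, Option.mem_def, Option.some.injEq] at hy
      subst hy
      exact h1'.2.2 x hx m (by simp)⟩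
  · intro i a' m' b' ha hm hb
    by_cases hc : i + 2 ≤ l.length
    · exact h1.2 i a' m' b'
        (by rw [← key i (by omega)]; exact ha)
        (by rw [← key (i+1) (by omega)]; exact hm)
        (by rw [← key (i+2) (by omega)]; exact hb)
    · by_cases hc2 : l.length ≤ i
      · refine h2.2 (i - l.length) a' m' b' ?_ ?_ ?_
        · rw [← List.getElem?_append_right hc2]; exact ha
        · rw [show i - l.length + 1 = i + 1 - l.length by omega,
            ← List.getElem?_append_right (by omega)]; exact hm
        · rw [show i - l.length + 2 = i + 2 - l.length by omega,
            ← List.getElem?_append_right (by omega)]; exact hb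
      · -- i + 1 = l.length : junction triple
        have hi1 : i + 1 = l.length := by omega
        have ha' : l.getLast? = some a' := by
          rw [List.getLast?_eq_getElem?, show l.length - 1 = i by omega]
          rw [List.getElem?_append_left (by omega)] at ha
          exact ha
        have hb' : r.head? = some b' := by
          rw [List.head?_eq_getElem?]
          rw [List.getElem?_append_right (by omega),
            show i + 2 - l.length = 1 by omega] at hb
          simpa using hb
        have hm' : m' = m := by
          rw [List.getElem?_append_right (by omega), show i + 1 - l.length = 0 by omega] at hm
          simpa using hm.symm
        subst hm'
        exact hj a' b' ha' hb'

lemma exists_dup_decomp {w : List V} (h : ¬ w.Nodup) :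
    ∃ (c : V) (s t u : List V), w = s ++ c :: (t ++ c :: u) := by
  induction w with
  | nil => simp at h
  | cons x xs ih =>
    by_cases hx : x ∈ xs
    · obtain ⟨t, u, rfl⟩ := List.append_of_mem hx
      exact ⟨x, [], t, u, by simp⟩
    · have hxs : ¬ xs.Nodup := fun hn => h (List.nodup_cons.2 ⟨hx, hn⟩)
      obtain ⟨c, s, t, u, rfl⟩ := ih hxs
      exact ⟨c, x :: s, t, u, by simp⟩

lemma descend (hacyc : ∀ v, ¬ Relation.TransGen E v v) :
    ∀ (l : List V) (c0 x : V), AWalk E Z (c0 :: l) → l.head? = some x → E c0 x →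
    (∃ y, l.getLast? = some y ∧ Relation.TransGen E c0 y) ∨ c0 ∈ anZ E Z := by
  intro l
  induction l with
  | nil => intro c0 x _ hx; simp at hx
  | cons x' l' ih =>
    intro c0 x hw hx hE
    have hxx : x = x' := by simpa using hx.symm
    subst hxx
    cases l' with
    | nil => exact Or.inl ⟨x, by simp, Relation.TransGen.single hE⟩
    | cons x2 l2 =>
      by_cases h2 : E x2 x
      · right
        have ht : TripleOK E Z c0 x x2 := hw.2 0 c0 x x2 (by simp) (by simp) (by simp)
        obtain ⟨d, hd, hdz⟩ := ht.1 ⟨hE, h2⟩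
        exact ⟨d, Relation.ReflTransGen.head hE hd, hdz⟩
      · have hadj : AdjUndir E x x2 := by
          have := hw.1
          change List.IsChain _ _ at this; rw [List.isChain_cons_cons, List.isChain_cons_cons] at this
          exact this.2.1
        have hE2 : E x x2 := hadj.resolve_right h2
        have hsub : AWalk E Z (x :: x2 :: l2) := hw.infix ⟨[c0], [], by simp⟩
        rcases ih x x2 hsub rfl hE2 with ⟨y, hy, hty⟩ | hanz
        · exact Or.inl ⟨y, by simpa using hy, (Relation.TransGen.single hE).trans hty⟩
        · obtain ⟨d, hd, hdz⟩ := hanz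
          exact Or.inr ⟨d, Relation.ReflTransGen.head hE hd, hdz⟩

end Comb2


section Comb3

variable {E : V → V → Prop} {Z : Set V}

lemma shortcut (hacyc : ∀ v, ¬ Relation.TransGen E v v) {v1 v2 : V} :
    ∀ (n : ℕ) (w : List V), w.length ≤ n → AWalk E Z w → w.head? = some v1 →
      w.getLast? = some v2 →
      ∃ w', AWalk E Z w' ∧ w'.Nodup ∧ w'.head? = some v1 ∧ w'.getLast? = some v2 := by
  intro n
  induction n with
  | zero =>
    intro w hlen _ hh _
    cases w with
    | nil => simp at hh
    | cons x xs => simp at hlen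
  | succ n ih =>
    intro w hlen hw hh hl
    by_cases hnd : w.Nodup
    · exact ⟨w, hw, hnd, hh, hl⟩
    obtain ⟨c, s, t, u, rfl⟩ := exists_dup_decomp hnd
    have htne : t ≠ [] := by
      rintro rfl
      have hcc : AdjUndir E c c :=
        (List.isChain_cons_cons.1 (hw.infix ⟨s, u, by simp⟩ : AWalk E Z [c, c]).1).1
      rcases hcc with h | h <;> exact hacyc c (Relation.TransGen.single h)
    have hlen' : s.length + t.length + u.length + 2 ≤ n + 1 := by
      simp only [List.length_append, List.length_cons] at hlen; omega
    rcases hse : s with _ | ⟨s0, srest⟩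
    · -- s = [] : take the suffix c :: u
      subst hse
      have hcv1 : v1 = c := by simpa using hh.symm
      have hsuf : AWalk E Z (c :: u) := hw.infix ⟨c :: t, [], by simp⟩
      have hlast : (c :: u).getLast? = some v2 := by
        rw [show ([] : List V) ++ c :: (t ++ c :: u) = (c :: t) ++ (c :: u) by simp] at hl
        rwa [List.getLast?_append_of_ne_nil _ (by simp)] at hl
      exact ih (c :: u) (by simp; omega) hsuf (by simp [hcv1]) hlast
    have hsne : s ≠ [] := by rw [hse]; simp
    clear hse
    rcases hue : u with _ | ⟨b0, u₀⟩
    · -- u = [] : take the prefix s ++ [c]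
      subst hue
      have hcv2 : c = v2 := by
        rw [show s ++ c :: (t ++ c :: []) = (s ++ c :: t) ++ [c] by simp] at hl
        rw [List.getLast?_append_of_ne_nil _ (show [c] ≠ [] by simp)] at hl
        simpa using hl
      have hpre : AWalk E Z (s ++ [c]) := hw.infix ⟨[], t ++ [c], by simp⟩
      refine ih (s ++ [c]) (by simp; omega) hpre ?_ ?_
      · rw [List.head?_append_of_ne_nil _ hsne]
        rwa [List.head?_append_of_ne_nil _ hsne] at hh
      · rw [List.getLast?_append_of_ne_nil _ (show [c] ≠ [] by simp)]
        simp [hcv2]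
    have hune : u ≠ [] := by rw [hue]; simp
    clear hue
    -- main shortcut case
    have h1 : AWalk E Z (s ++ [c]) := hw.infix ⟨[], t ++ c :: u, by simp⟩
    have h2 : AWalk E Z (c :: u) := hw.infix ⟨s ++ c :: t, [], by simp⟩
    have hmid : AWalk E Z (c :: (t ++ [c])) := hw.infix ⟨s, u, by simp⟩
    obtain ⟨t0, t', rfl⟩ : ∃ t0 t', t = t0 :: t' := by
      cases t with
      | nil => exact absurd rfl htne
      | cons x xs => exact ⟨x, xs, rfl⟩
    have hglue : AWalk E Z (s ++ c :: u) := by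
      refine h1.glue h2 ?_
      intro a bb ha hb
      have hsd : s.dropLast ++ [a] = s := List.dropLast_append_getLast? a ha
      have T1 : TripleOK E Z a c t0 :=
        awalk_triple_of_decomp (pre := s.dropLast) (post := t' ++ c :: u) hw (by
          conv_lhs => rw [← hsd]
          simp)
      constructor
      · rintro ⟨hac, hbc⟩
        by_cases ht0 : E t0 c
        · exact T1.1 ⟨hac, ht0⟩
        · have hadj : AdjUndir E c t0 := (List.isChain_cons_cons.1 hmid.1).1
          have hct0 : E c t0 := hadj.resolve_right ht0
          rcases descend hacyc ((t0 :: t') ++ [c]) c t0 hmid (by simp) hct0 with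
            ⟨y, hy, hty⟩ | hanz
          · have hyc : y = c := by
              rw [List.getLast?_append_of_ne_nil _ (show [c] ≠ [] by simp)] at hy
              simpa using hy.symm
            rw [hyc] at hty
            exact absurd hty (hacyc c)
          · exact hanz
      · rintro hnc
        by_cases hac : E a c
        · have hbc : ¬ E bb c := fun hcon => hnc ⟨hac, hcon⟩
          obtain ⟨u₀, rfl⟩ : ∃ u₀, u = bb :: u₀ := by
            cases u with
            | nil => exact absurd rfl hune
            | cons x xs =>
              refine ⟨xs, ?_⟩
              have : x = bb := by simpa using hb
              rw [this]
          have htd : (t0 :: t').dropLast ++ [(t0 :: t').getLast htne] = t0 :: t' :=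
            List.dropLast_append_getLast htne
          have T2 : TripleOK E Z ((t0 :: t').getLast htne) c bb :=
            awalk_triple_of_decomp (pre := s ++ c :: (t0 :: t').dropLast) (post := u₀) hw (by
              conv_lhs => rw [show t0 :: t' = (t0 :: t').dropLast ++ [(t0 :: t').getLast htne]
                from htd.symm]
              simp)
          exact T2.2 (fun hcon => hbc hcon.2)
        · exact T1.2 (fun hcon => hac hcon.1)
    refine ih (s ++ c :: u) (by simp; omega) hglue ?_ ?_
    · rw [List.head?_append_of_ne_nil _ hsne]
      rwa [List.head?_append_of_ne_nil _ hsne] at hh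
    · rw [show s ++ c :: (t0 :: t' ++ c :: u) = (s ++ c :: t0 :: t') ++ (c :: u) by simp] at hl
      rw [List.getLast?_append_of_ne_nil _ (show c :: u ≠ [] by simp)]
      rwa [List.getLast?_append_of_ne_nil _ (show c :: u ≠ [] by simp)] at hl

lemma awalk_singleton {x : V} : AWalk E Z [x] := by
  refine ⟨by simp [List.Chain'], ?_⟩
  intro i a m b _ _ hb
  rw [List.getElem?_eq_none (by simp)] at hb
  simp at hb

lemma awalk_pair {x y : V} (h : AdjUndir E x y) : AWalk E Z [x, y] := by
  refine ⟨by simp [List.Chain', h], ?_⟩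
  intro i a m b _ _ hb
  rw [List.getElem?_eq_none (by simp)] at hb
  simp at hb

lemma awalk_triple_list {x m y : V} (h1 : AdjUndir E x m) (h2 : AdjUndir E m y)
    (hok : TripleOK E Z x m y) : AWalk E Z [x, m, y] := by
  refine ⟨by simp [List.Chain', h1, h2], ?_⟩
  intro i a m' b ha hm hb
  match i with
  | 0 =>
    have hax : a = x := by simpa using ha.symm
    have hmm : m' = m := by simpa using hm.symm
    have hby : b = y := by simpa using hb.symm
    subst hax; subst hmm; subst hby; exact hok
  | (j+1) =>
    rw [List.getElem?_eq_none (by simp)] at hb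
    simp at hb

lemma awalk_of_chainE (hacyc : ∀ v, ¬ Relation.TransGen E v v) {l : List V}
    (hc : l.Chain' E) (hZfree : ∀ x ∈ l, x ∉ Z) : AWalk E Z l := by
  refine ⟨hc.imp (fun _ _ h => Or.inl h), ?_⟩
  intro i a m b ha hm hb
  have ham : E a m := chain'_getElem hc ha hm
  have hmb : E m b := chain'_getElem hc hm hb
  constructor
  · rintro ⟨-, hbm⟩
    exact absurd ((Relation.TransGen.single hmb).trans (Relation.TransGen.single hbm))
      (hacyc m)
  · intro _
    exact hZfree m (List.mem_of_getElem? hm)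

lemma awalk_rev_of_chainE (hacyc : ∀ v, ¬ Relation.TransGen E v v) {l : List V}
    (hc : l.Chain' E) (hZfree : ∀ x ∈ l, x ∉ Z) : AWalk E Z l.reverse := by
  refine ⟨?_, ?_⟩
  · show List.IsChain _ l.reverse; rw [List.isChain_reverse]
    exact hc.imp (fun _ _ h => Or.inr h)
  · intro i a m b ha hm hb
    have hlen : i + 2 < l.length := by
      have := (List.getElem?_eq_some_iff.1 hb).1
      simpa using this
    rw [List.getElem?_reverse (show i < l.length by omega)] at ha
    rw [List.getElem?_reverse (show i + 1 < l.length by omega)] at hm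
    rw [List.getElem?_reverse (show i + 2 < l.length by omega)] at hb
    have hma : E m a := by
      refine chain'_getElem hc hm ?_
      rwa [show l.length - 1 - (i+1) + 1 = l.length - 1 - i by omega]
    have hbm : E b m := by
      refine chain'_getElem hc hb ?_
      rwa [show l.length - 1 - (i+2) + 1 = l.length - 1 - (i+1) by omega]
    constructor
    · rintro ⟨ham, -⟩
      exact absurd ((Relation.TransGen.single ham).trans (Relation.TransGen.single hma))
        (hacyc a)
    · intro _
      exact hZfree m (List.mem_of_getElem? hm)

lemma extend {W r : List V} {m : V} (hW : AWalk E Z W) (hlast : W.getLast? = some m)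
    (hr : AWalk E Z (m :: r))
    (hj : ∀ a b, W.dropLast.getLast? = some a → r.head? = some b → TripleOK E Z a m b) :
    AWalk E Z (W.dropLast ++ m :: r) ∧
      (W.dropLast ++ m :: r).head? = W.head? ∧
      (W.dropLast ++ m :: r).getLast? = (m :: r).getLast? := by
  have hWd : W.dropLast ++ [m] = W := List.dropLast_append_getLast? m hlast
  refine ⟨AWalk.glue (by rwa [hWd]) hr hj, ?_, ?_⟩
  · rcases hde : W.dropLast with _ | ⟨d0, ds⟩
    · have hW1 : W = [m] := by rw [← hWd, hde]; simp
      simp [hW1]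
    · conv_rhs => rw [← hWd]
      rw [hde, List.head?_append_of_ne_nil _ (by simp),
        List.head?_append_of_ne_nil _ (by simp)]
  · rw [List.getLast?_append_of_ne_nil _ (by simp)]

end Comb3

section Comb4

variable (E : V → V → Prop) (Z : Set V)

/-- ancestors of `{v1, v2} ∪ Z`. -/
def An (v1 v2 : V) : Set V :=
  {v | ∃ t, (t = v1 ∨ t = v2 ∨ t ∈ Z) ∧ Relation.ReflTransGen E v t}

/-- restricted moral adjacency on the ancestral set. -/
def Moral (v1 v2 : V) (u w : V) : Prop :=
  u ∈ An E Z v1 v2 ∧ w ∈ An E Z v1 v2 ∧ u ∉ Z ∧ w ∉ Z ∧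
    ((E u w ∨ E w u) ∨ ∃ c, E u c ∧ E w c ∧ c ∈ anZ E Z)

variable {E Z}

lemma moral_symm {v1 v2 u w : V} (h : Moral E Z v1 v2 u w) : Moral E Z v1 v2 w u := by
  obtain ⟨h1, h2, h3, h4, h5⟩ := h
  refine ⟨h2, h1, h4, h3, ?_⟩
  rcases h5 with (h | h) | ⟨c, hc1, hc2, hc3⟩
  · exact Or.inl (Or.inr h)
  · exact Or.inl (Or.inl h)
  · exact Or.inr ⟨c, hc2, hc1, hc3⟩

lemma pathList {v t : V} (h : Relation.ReflTransGen E v t) :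
    ∃ l : List V, l.Chain' E ∧ l.head? = some v ∧ l.getLast? = some t ∧
      ∀ x ∈ l, Relation.ReflTransGen E v x ∧ Relation.ReflTransGen E x t := by
  induction h with
  | refl =>
    refine ⟨[v], by simp [List.Chain'], by simp, by simp, ?_⟩
    intro x hx
    have : x = v := by simpa using hx
    subst this
    exact ⟨Relation.ReflTransGen.refl, Relation.ReflTransGen.refl⟩
  | @tail b c _ hbc ih =>
    obtain ⟨l, hc', hh, hl, hmem⟩ := ih
    refine ⟨l ++ [c], ?_, ?_, ?_, ?_⟩
    · refine List.isChain_append.2 ⟨hc', by simp, ?_⟩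
      intro x hx y hy
      have hxy : x = b := by rw [hl] at hx; exact (by simpa using hx : b = x).symm
      have hyc : y = c := by exact (by simpa using hy : c = y).symm
      subst hxy; subst hyc; exact hbc
    · have hlne : l ≠ [] := by rintro rfl; simp at hh
      rw [List.head?_append_of_ne_nil _ hlne]; exact hh
    · rw [List.getLast?_append_of_ne_nil _ (by simp)]; simp
    · intro x hx
      rcases List.mem_append.1 hx with hx | hx
      · exact ⟨(hmem x hx).1, (hmem x hx).2.tail hbc⟩
      · have : x = c := by simpa using hx
        subst this
        exact ⟨Relation.ReflTransGen.tail (hmem b (by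
          have : b ∈ l.getLast? := hl
          exact List.mem_of_mem_getLast? this)).1 hbc, Relation.ReflTransGen.refl⟩

lemma moral_chain_of_dirpath {v1 v2 : V} :
    ∀ (l : List V), l.Chain' E → (∀ x ∈ l, x ∈ An E Z v1 v2 ∧ x ∉ Z) →
      ∀ x t, l.head? = some x → l.getLast? = some t →
        Relation.ReflTransGen (Moral E Z v1 v2) x t := by
  intro l
  induction l with
  | nil => intro _ _ x t hx _; simp at hx
  | cons y l' ih =>
    intro hc hmem x t hx ht
    have hxy : x = y := by simpa using hx.symm
    subst hxy
    cases l' with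
    | nil =>
      have : x = t := by simpa using ht
      subst this; exact Relation.ReflTransGen.refl
    | cons y2 l2 =>
      have hE : E x y2 := (List.isChain_cons_cons.1 hc).1
      have hM : Moral E Z v1 v2 x y2 :=
        ⟨(hmem x (by simp)).1, (hmem y2 (by simp)).1, (hmem x (by simp)).2,
          (hmem y2 (by simp)).2, Or.inl (Or.inl hE)⟩
      refine Relation.ReflTransGen.head hM ?_
      exact ih (List.isChain_cons_cons.1 hc).2 (fun z hz => hmem z (by simp [hz])) y2 t rfl
        (by simpa using ht)

lemma good (hacyc : ∀ v, ¬ Relation.TransGen E v v) {v1 v2 : V} :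
    ∀ u, Relation.ReflTransGen (Moral E Z v1 v2) v1 u →
      (∃ w, AWalk E Z w ∧ w.head? = some v1 ∧ w.getLast? = some v2) ∨
      (∃ w, AWalk E Z w ∧ w.head? = some v1 ∧ w.getLast? = some u) := by
  intro u h
  induction h with
  | refl => exact Or.inr ⟨[v1], awalk_singleton, rfl, rfl⟩
  | @tail b c _ hM ih =>
    rcases ih with hL | ⟨W, hW, hWh, hWl⟩
    · exact Or.inl hL
    obtain ⟨hbAn, hcAn, hbZ, hcZ, hedges⟩ := hM
    by_cases hbceq : b = c
    · exact Or.inr ⟨W, hW, hWh, hbceq ▸ hWl⟩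
    -- helper for appending a one-or-two step segment
    have base : ∀ r : List V, AWalk E Z (b :: r) →
        (∀ a bb, W.dropLast.getLast? = some a → r.head? = some bb → TripleOK E Z a b bb) →
        ∃ w, AWalk E Z w ∧ w.head? = some v1 ∧ w.getLast? = some ((b :: r).getLast (by simp)) := by
      intro r hr hjr
      obtain ⟨hA, hH, hL'⟩ := extend hW hWl hr hjr
      refine ⟨W.dropLast ++ b :: r, hA, by rw [hH]; exact hWh, by rw [hL']; exact List.getLast?_eq_getLast (by simp)⟩
    rcases hedges with (hbc | hcb) | ⟨cc, hb', hc', hccanz⟩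
    · -- direct edge b → c
      right
      have hseg : AWalk E Z (b :: [c]) := awalk_pair (Or.inl hbc)
      have := base [c] hseg (fun a bb ha hb => by
        have hbbc : bb = c := by simpa using hb.symm
        subst hbbc
        constructor
        · rintro ⟨-, hcb'⟩
          exact absurd ((Relation.TransGen.single hbc).trans (Relation.TransGen.single hcb'))
            (hacyc b)
        · intro _; exact hbZ)
      simpa using this
    · -- edge c → b : possible collider at b
      rcases hde : W.dropLast.getLast? with _ | a
      · right
        have hseg : AWalk E Z (b :: [c]) := awalk_pair (Or.inr hcb)
        have := base [c] hseg (fun a bb ha _ => by rw [hde] at ha; cases ha)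
        simpa using this
      · by_cases hEa : E a b
        · by_cases hbanz : b ∈ anZ E Z
          · right
            have hseg : AWalk E Z (b :: [c]) := awalk_pair (Or.inr hcb)
            have := base [c] hseg (fun a' bb ha' hb' => by
              obtain rfl : a = a' := by rw [hde] at ha'; simpa using ha'
              obtain rfl : c = bb := by simpa using hb'
              exact ⟨fun _ => hbanz, fun hcon => absurd ⟨hEa, hcb⟩ hcon⟩)
            simpa using this
          · -- reroute
            obtain ⟨tt, htt, hpath⟩ := hbAn
            have hZfree : ∀ x, Relation.ReflTransGen E b x → x ∉ Z := by
              intro x hx hxZ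
              exact hbanz ⟨x, hx, hxZ⟩
            rcases htt with rfl | rfl | httZ
            · -- tt = v1 : reroute the prefix through the descending path, end at c
              right
              obtain ⟨l, hlc, hlh, hll, hlmem⟩ := pathList hpath
              have hrl : AWalk E Z l.reverse :=
                awalk_rev_of_chainE hacyc hlc (fun x hx => hZfree x (hlmem x hx).1)
              have hrll : l.reverse.getLast? = some b := by simp [hlh]
              have hseg : AWalk E Z (b :: [c]) := awalk_pair (Or.inr hcb)
              obtain ⟨hA, hH, hL'⟩ := extend hrl hrll hseg (fun a' bb ha' hb' => by
                constructor
                · rintro ⟨hab, -⟩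
                  -- a' is the second vertex of l, so E b a'
                  obtain ⟨ltail, hlt⟩ : ∃ lt, l = b :: lt := by
                    cases l with
                    | nil => simp at hlh
                    | cons x xs =>
                      refine ⟨xs, ?_⟩
                      have hxb : x = b := by simpa using hlh
                      rw [hxb]
                  rw [hlt] at ha' hlc
                  rw [show (b :: ltail).reverse.dropLast = ltail.reverse by simp] at ha'
                  rw [List.getLast?_reverse] at ha'
                  obtain ⟨lt2, hlt2⟩ : ∃ lt2, ltail = a' :: lt2 := by
                    cases ltail with
                    | nil => simp at ha'
                    | cons x xs =>
                      refine ⟨xs, ?_⟩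
                      have hxa : x = a' := by simpa using ha'
                      rw [hxa]
                  rw [hlt2] at hlc
                  have hba' : E b a' := (List.isChain_cons_cons.1 hlc).1
                  exact absurd ((Relation.TransGen.single hab).trans
                    (Relation.TransGen.single hba')) (hacyc a')
                · intro _; exact hbZ)
              refine ⟨_, hA, ?_, ?_⟩
              · rw [hH, List.head?_reverse]; exact hll
              · rw [hL']; simp
            · -- tt = v2 : complete the walk to v2
              left
              obtain ⟨l, hlc, hlh, hll, hlmem⟩ := pathList hpath
              have hlw : AWalk E Z l :=
                awalk_of_chainE hacyc hlc (fun x hx => hZfree x (hlmem x hx).1)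
              obtain ⟨ltail, hlt⟩ : ∃ lt, l = b :: lt := by
                cases l with
                | nil => simp at hlh
                | cons x xs =>
                  refine ⟨xs, ?_⟩
                  have hxb : x = b := by simpa using hlh
                  rw [hxb]
              rw [hlt] at hlw hlc hll
              obtain ⟨hA, hH, hL'⟩ := extend hW hWl hlw (fun a' bb ha' hb' => by
                constructor
                · rintro ⟨-, hbbb⟩
                  obtain ⟨lt2, hlt2⟩ : ∃ lt2, ltail = bb :: lt2 := by
                    cases ltail with
                    | nil => simp at hb'
                    | cons x xs =>
                      refine ⟨xs, ?_⟩
                      have hxbb : x = bb := by simpa using hb'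
                      rw [hxbb]
                  rw [hlt2] at hlc
                  have hbbb' : E b bb := (List.isChain_cons_cons.1 hlc).1
                  exact absurd ((Relation.TransGen.single hbbb').trans
                    (Relation.TransGen.single hbbb)) (hacyc b)
                · intro _; exact hbZ)
              refine ⟨_, hA, by rw [hH]; exact hWh, by rw [hL']; exact hll⟩
            · exact absurd ⟨tt, hpath, httZ⟩ hbanz
        · right
          have hseg : AWalk E Z (b :: [c]) := awalk_pair (Or.inr hcb)
          have := base [c] hseg (fun a' bb ha' hb' => by
            have haa : a' = a := by rw [hde] at ha'; simpa using ha'.symm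
            subst haa
            exact ⟨fun hcon => absurd hcon.1 hEa, fun _ => hbZ⟩)
          simpa using this
    · -- collider segment b → cc ← c
      right
      have hccb : ¬ E cc b := fun hcon =>
        absurd ((Relation.TransGen.single hb').trans (Relation.TransGen.single hcon)) (hacyc b)
      have hok : TripleOK E Z b cc c :=
        ⟨fun _ => hccanz, fun hcon => absurd ⟨hb', hc'⟩ hcon⟩
      have hseg : AWalk E Z (b :: [cc, c]) :=
        awalk_triple_list (Or.inl hb') (Or.inr hc') hok
      have := base [cc, c] hseg (fun a bb ha hb => by
        have hbbcc : bb = cc := by simpa using hb.symm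
        subst hbbcc
        constructor
        · rintro ⟨-, hcon⟩
          exact absurd hcon hccb
        · intro _; exact hbZ)
      simpa using this

lemma not_blocked_of_awalk (hacyc : ∀ v, ¬ Relation.TransGen E v v) {w : List V}
    (h : AWalk E Z w) : ¬ Blocked E Z w := by
  rintro ⟨pre, post, a, m, b, hd, hbl⟩
  have ht := awalk_triple_of_decomp h hd
  rcases hbl with ⟨hconf, hmZ⟩ | ⟨⟨ham, hbm⟩, hnd⟩
  · have hnc : ¬ (E a m ∧ E b m) := by
      rintro ⟨h1, h2⟩
      rcases hconf with ⟨-, hmb⟩ | ⟨-, hma⟩ | ⟨hma, -⟩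
      · exact hacyc m ((Relation.TransGen.single hmb).trans (Relation.TransGen.single h2))
      · exact hacyc a ((Relation.TransGen.single h1).trans (Relation.TransGen.single hma))
      · exact hacyc a ((Relation.TransGen.single h1).trans (Relation.TransGen.single hma))
    exact ht.2 hnc hmZ
  · obtain ⟨d, hmd, hdz⟩ := ht.1 ⟨ham, hbm⟩
    exact hnd d hmd hdz

lemma no_moral_conn (hacyc : ∀ v, ¬ Relation.TransGen E v v) {v1 v2 : V}
    (hsep : DSep E Z v1 v2) :
    ¬ Relation.ReflTransGen (Moral E Z v1 v2) v1 v2 := by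
  intro h
  have hwalk : ∃ w, AWalk E Z w ∧ w.head? = some v1 ∧ w.getLast? = some v2 := by
    rcases good hacyc v2 h with hL | hR
    · exact hL
    · exact hR
  obtain ⟨w, hw, hwh, hwl⟩ := hwalk
  obtain ⟨w', hw', hnd', hh', hl'⟩ := shortcut hacyc w.length w le_rfl hw hwh hwl
  exact not_blocked_of_awalk hacyc hw' (hsep w' hw'.1 hnd' hh' hl')

end Comb4

section Prob

open scoped Classical

set_option linter.unusedSectionVars false

/-- instance-free indicator function. -/
noncomputable def ind (c : Prop) : ℝ := if c then 1 else 0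

lemma ind_pos {c : Prop} (h : c) : ind c = 1 := if_pos h

lemma ind_neg {c : Prop} (h : ¬ c) : ind c = 0 := if_neg h

lemma ind_congr {c d : Prop} (h : c ↔ d) : ind c = ind d := by
  by_cases hc : c
  · rw [ind_pos hc, ind_pos (h.1 hc)]
  · rw [ind_neg hc, ind_neg (fun hd => hc (h.2 hd))]

lemma ind_and (c d : Prop) : ind (c ∧ d) = ind c * ind d := by
  by_cases hc : c
  · by_cases hd : d
    · rw [ind_pos hc, ind_pos hd, ind_pos ⟨hc, hd⟩]; ring
    · rw [ind_neg hd, ind_neg (fun h => hd h.2)]; ring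
  · rw [ind_neg hc, ind_neg (fun h => hc h.1)]; ring

lemma mul_ind_eq_ite (X : ℝ) (c : Prop) [Decidable c] : X * ind c = if c then X else 0 := by
  by_cases h : c
  · rw [if_pos h, ind_pos h, mul_one]
  · rw [if_neg h, ind_neg h, mul_zero]

variable [Fintype V] [DecidableEq V] {Ω : V → Type*} [∀ v, Fintype (Ω v)]

lemma sum_reindex (F : (∀ v, Ω v) → ℝ) (v0 : V) (c : Ω v0) :
    ∑ x : ∀ v, Ω v, F x =
      ∑ x : ∀ v, Ω v, ∑ α : Ω v0, if x v0 = c then F (Function.update x v0 α) else 0 := by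
  let e : ((∀ v, Ω v) × Ω v0) ≃ ((∀ v, Ω v) × Ω v0) :=
    { toFun := fun q => (Function.update q.1 v0 q.2, q.1 v0)
      invFun := fun q => (Function.update q.1 v0 q.2, q.1 v0)
      left_inv := by
        intro q
        simp [Function.update_idem, Function.update_self, Function.update_eq_self]
      right_inv := by
        intro q
        simp [Function.update_idem, Function.update_self, Function.update_eq_self] }
  have key : ∑ q : ((∀ v, Ω v) × Ω v0),
      (if q.1 v0 = c then F (Function.update q.1 v0 q.2) else 0) =
      ∑ q : ((∀ v, Ω v) × Ω v0), (if q.2 = c then F q.1 else 0) := by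
    rw [← Equiv.sum_comp e (fun q => if q.1 v0 = c then F (Function.update q.1 v0 q.2) else 0)]
    apply Finset.sum_congr rfl
    intro q _
    simp [e, Function.update_idem, Function.update_self, Function.update_eq_self]
  calc ∑ x : ∀ v, Ω v, F x
      = ∑ q : ((∀ v, Ω v) × Ω v0), (if q.2 = c then F q.1 else 0) := by
        rw [Fintype.sum_prod_type]
        apply Finset.sum_congr rfl
        intro x _
        rw [Finset.sum_ite_eq' Finset.univ c (fun _ => F x)]
        simp
    _ = ∑ q : ((∀ v, Ω v) × Ω v0),
          (if q.1 v0 = c then F (Function.update q.1 v0 q.2) else 0) := key.symm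
    _ = ∑ x : ∀ v, Ω v, ∑ α : Ω v0, if x v0 = c then F (Function.update x v0 α) else 0 := by
        rw [Fintype.sum_prod_type]

lemma exists_max {E : V → V → Prop} (hacyc : ∀ v, ¬ Relation.TransGen E v v)
    (T : Finset V) (hT : T.Nonempty) :
    ∃ v ∈ T, ∀ w ∈ T, ¬ Relation.TransGen E v w := by
  classical
  induction T using Finset.induction_on with
  | empty => exact absurd hT (by simp)
  | @insert a s ha ih =>
    rcases s.eq_empty_or_nonempty with rfl | hs
    · refine ⟨a, by simp, ?_⟩
      intro w hw
      have hwa : w = a := by simpa using hw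
      rw [hwa]
      exact hacyc a
    · obtain ⟨v, hv, hmax⟩ := ih hs
      by_cases hva : Relation.TransGen E v a
      · refine ⟨a, by simp, ?_⟩
        intro w hw
        rcases Finset.mem_insert.1 hw with rfl | hw'
        · exact hacyc w
        · exact fun hc => hmax w hw' (hva.trans hc)
      · refine ⟨v, by simp [hv], ?_⟩
        intro w hw
        rcases Finset.mem_insert.1 hw with rfl | hw'
        · exact hva
        · exact hmax w hw'

lemma sum_out {E : V → V → Prop} (hacyc : ∀ v, ¬ Relation.TransGen E v v)
    (f : ∀ _ : V, (∀ w, Ω w) → ℝ)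
    (hloc : ∀ v (x y : ∀ w, Ω w), x v = y v → (∀ w, E w v → x w = y w) → f v x = f v y)
    (hker : ∀ v (x : ∀ w, Ω w), ∑ α : Ω v, f v (Function.update x v α) = 1)
    (z : ∀ v, Ω v) :
    ∀ (T : Finset V) (g : (∀ v, Ω v) → ℝ),
      (∀ (x : ∀ v, Ω v) (v : V), v ∈ T → ∀ α : Ω v, g (Function.update x v α) = g x) →
      ∑ x : ∀ v, Ω v, g x * ∏ v ∈ T, f v x =
        ∑ x : ∀ v, Ω v, g x * ind (∀ v ∈ T, x v = z v) := by
  classical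
  intro T
  induction T using Finset.strongInduction with
  | _ T ihT =>
    intro g hg
    rcases T.eq_empty_or_nonempty with rfl | hT
    · simp only [Finset.prod_empty]
      apply Finset.sum_congr rfl
      intro x _
      rw [ind_pos (by intro v hv; simp at hv)]
    obtain ⟨v0, hv0, hmax⟩ := exists_max hacyc T hT
    have hstep : ∑ x : ∀ v, Ω v, g x * ∏ v ∈ T, f v x =
        ∑ x : ∀ v, Ω v, (g x * ind (x v0 = z v0)) * ∏ v ∈ T.erase v0, f v x := by
      rw [sum_reindex (fun x => g x * ∏ v ∈ T, f v x) v0 (z v0)]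
      apply Finset.sum_congr rfl
      intro x _
      have hin : ∀ α : Ω v0,
          (if x v0 = z v0 then g (Function.update x v0 α) * ∏ v ∈ T, f v (Function.update x v0 α)
            else 0) =
          (if x v0 = z v0 then
            (g x * ∏ v ∈ T.erase v0, f v x) * f v0 (Function.update x v0 α) else 0) := by
        intro α
        by_cases hxz : x v0 = z v0
        · rw [if_pos hxz, if_pos hxz]
          have hgup : g (Function.update x v0 α) = g x := hg x v0 hv0 α
          have hprod : ∏ v ∈ T, f v (Function.update x v0 α) =
              (∏ v ∈ T.erase v0, f v x) * f v0 (Function.update x v0 α) := by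
            rw [← Finset.prod_erase_mul T _ hv0]
            congr 1
            apply Finset.prod_congr rfl
            intro v hv
            have hvne : v ≠ v0 := (Finset.mem_erase.1 hv).1
            refine hloc v _ _ (Function.update_of_ne hvne _ _) ?_
            intro w hw
            by_cases hwv : w = v0
            · subst hwv
              exact absurd (Relation.TransGen.single hw) (hmax v (Finset.mem_of_mem_erase hv))
            · exact Function.update_of_ne hwv _ _
          rw [hgup, hprod]; ring
        · rw [if_neg hxz, if_neg hxz]
      rw [Finset.sum_congr rfl (fun α _ => hin α)]
      by_cases hxz : x v0 = z v0
      · simp only [if_pos hxz, ← Finset.mul_sum, hker v0 x]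
        rw [ind_pos hxz]
        ring
      · simp only [if_neg hxz, ind_neg hxz]
        simp
    rw [hstep]
    have := ihT (T.erase v0) (Finset.erase_ssubset hv0)
      (fun x => g x * ind (x v0 = z v0))
      (by
        intro x v hv α
        have hvne : v ≠ v0 := (Finset.mem_erase.1 hv).1
        simp only [hg x v (Finset.mem_of_mem_erase hv) α,
          Function.update_of_ne (Ne.symm hvne)])
    rw [this]
    apply Finset.sum_congr rfl
    intro x _
    show (g x * ind (x v0 = z v0)) * ind (∀ v ∈ T.erase v0, x v = z v)
      = g x * ind (∀ v ∈ T, x v = z v)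
    by_cases hxz : x v0 = z v0
    · by_cases hall : ∀ v ∈ T.erase v0, x v = z v
      · have hT' : ∀ v ∈ T, x v = z v := by
          intro v hv
          by_cases hvv : v = v0
          · subst hvv; exact hxz
          · exact hall v (Finset.mem_erase.2 ⟨hvv, hv⟩)
        rw [ind_pos hxz, ind_pos hall, ind_pos hT']; ring
      · have hT' : ¬ ∀ v ∈ T, x v = z v := fun hc =>
          hall (fun v hv => hc v (Finset.mem_of_mem_erase hv))
        rw [ind_pos hxz, ind_neg hall, ind_neg hT']; ring
    · have hT' : ¬ ∀ v ∈ T, x v = z v := fun hc => hxz (hc v0 hv0)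
      rw [ind_neg hxz, ind_neg hT']; ring

lemma split_sum (p : V → Prop) (F G : (∀ v, Ω v) → ℝ)
    (hF : ∀ x y : ∀ v, Ω v, (∀ v, p v → x v = y v) → F x = F y)
    (hG : ∀ x y : ∀ v, Ω v, (∀ v, ¬ p v → x v = y v) → G x = G y) (x₀ : ∀ v, Ω v) :
    (∑ x : ∀ v, Ω v, F x * G x) =
      (∑ x : ∀ v, Ω v, F x * ind (∀ v, ¬ p v → x v = x₀ v)) *
      (∑ x : ∀ v, Ω v, G x * ind (∀ v, p v → x v = x₀ v)) := by
  classical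
  let e : ((∀ v : {v // p v}, Ω v.1) × (∀ v : {v // ¬ p v}, Ω v.1)) ≃ (∀ v, Ω v) :=
    (Equiv.piEquivPiSubtypeProd p Ω).symm
  have he : ∀ (st : (∀ v : {v // p v}, Ω v.1) × (∀ v : {v // ¬ p v}, Ω v.1)) (v : V),
      e st v = if h : p v then st.1 ⟨v, h⟩ else st.2 ⟨v, h⟩ := by
    intro st v
    rfl
  set s₀ : ∀ v : {v // p v}, Ω v.1 := fun v => x₀ v.1 with hs₀
  set t₀ : ∀ v : {v // ¬ p v}, Ω v.1 := fun v => x₀ v.1 with ht₀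
  have hsum : ∀ (H : (∀ v, Ω v) → ℝ), ∑ x : ∀ v, Ω v, H x =
      ∑ st : ((∀ v : {v // p v}, Ω v.1) × (∀ v : {v // ¬ p v}, Ω v.1)), H (e st) := by
    intro H
    rw [← Equiv.sum_comp e H]
  have hFe : ∀ s t, F (e (s, t)) = F (e (s, t₀)) := by
    intro s t
    apply hF
    intro v hv
    rw [he, he, dif_pos hv, dif_pos hv]
  have hGe : ∀ s t, G (e (s, t)) = G (e (s₀, t)) := by
    intro s t
    apply hG
    intro v hv
    rw [he, he, dif_neg hv, dif_neg hv]
  have hind1 : ∀ s t, ind (∀ v, ¬ p v → (e (s, t)) v = x₀ v) = ind (t = t₀) := by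
    intro s t
    apply ind_congr
    constructor
    · intro h
      funext w
      have := h w.1 w.2
      rwa [he, dif_neg w.2] at this
    · intro h v hv
      rw [he, dif_neg hv, h]
  have hind2 : ∀ s t, ind (∀ v, p v → (e (s, t)) v = x₀ v) = ind (s = s₀) := by
    intro s t
    apply ind_congr
    constructor
    · intro h
      funext w
      have := h w.1 w.2
      rwa [he, dif_pos w.2] at this
    · intro h v hv
      rw [he, dif_pos hv, h]
  have h1 : ∑ s, ∑ t, F (e (s, t)) * ind (∀ v, ¬ p v → (e (s, t)) v = x₀ v)
      = ∑ s, F (e (s, t₀)) := by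
    apply Finset.sum_congr rfl; intro s _
    calc ∑ t, F (e (s, t)) * ind (∀ v, ¬ p v → (e (s, t)) v = x₀ v)
        = ∑ t, (if t = t₀ then F (e (s, t)) else 0) := by
          apply Finset.sum_congr rfl; intro t _
          rw [hind1 s t, mul_ind_eq_ite]
      _ = F (e (s, t₀)) := by
          rw [Finset.sum_ite_eq' Finset.univ t₀ (fun t => F (e (s, t)))]
          simp
  have h2 : ∑ s, ∑ t, G (e (s, t)) * ind (∀ v, p v → (e (s, t)) v = x₀ v)
      = ∑ t, G (e (s₀, t)) := by
    calc ∑ s, ∑ t, G (e (s, t)) * ind (∀ v, p v → (e (s, t)) v = x₀ v)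
        = ∑ s, ∑ t, (if s = s₀ then G (e (s₀, t)) else 0) := by
          apply Finset.sum_congr rfl; intro s _
          apply Finset.sum_congr rfl; intro t _
          rw [hind2 s t, mul_ind_eq_ite, hGe s t]
      _ = ∑ t, G (e (s₀, t)) := by
          rw [Finset.sum_comm]
          apply Finset.sum_congr rfl; intro t _
          rw [Finset.sum_ite_eq' Finset.univ s₀ (fun _ => G (e (s₀, t)))]
          simp
  calc ∑ x : ∀ v, Ω v, F x * G x
      = ∑ s, ∑ t, F (e (s, t)) * G (e (s, t)) := by
        rw [hsum (fun x => F x * G x), Fintype.sum_prod_type]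
    _ = (∑ s, F (e (s, t₀))) * (∑ t, G (e (s₀, t))) := by
        rw [Finset.sum_mul_sum]
        apply Finset.sum_congr rfl; intro s _
        apply Finset.sum_congr rfl; intro t _
        rw [hFe s t, hGe s t]
    _ = (∑ x : ∀ v, Ω v, F x * ind (∀ v, ¬ p v → x v = x₀ v)) *
        (∑ x : ∀ v, Ω v, G x * ind (∀ v, p v → x v = x₀ v)) := by
        rw [hsum (fun x => F x * ind (∀ v, ¬ p v → x v = x₀ v)),
          Fintype.sum_prod_type,
          hsum (fun x => G x * ind (∀ v, p v → x v = x₀ v)),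
          Fintype.sum_prod_type, h1, h2]

end Prob


variable {Ω : V → Type*}

/-- The probability of an event under a pmf `p`. -/
noncomputable def pr [Fintype V] [DecidableEq V] [∀ v, Fintype (Ω v)]
    (p : (∀ v, Ω v) → ℝ) (s : Set (∀ v, Ω v)) : ℝ :=
  ∑ x : ∀ v, Ω v, Set.indicator s p x

/-- A pmf `p` factorizes according to the directed graph `E` if it is the product
over all vertices `v` of a nonnegative kernel depending only on the value at `v`
and the values at the parents of `v`, each kernel being a conditional pmf
(it sums to one over the values at `v`). -/
def Factorizes [Fintype V] [DecidableEq V] [∀ v, Fintype (Ω v)]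
    (E : V → V → Prop) (p : (∀ v, Ω v) → ℝ) : Prop :=
  ∃ f : ∀ _ : V, (∀ w, Ω w) → ℝ,
    (∀ v x, 0 ≤ f v x) ∧
    (∀ v (x y : ∀ w, Ω w), x v = y v → (∀ w, E w v → x w = y w) → f v x = f v y) ∧
    (∀ v (x : ∀ w, Ω w), ∑ a : Ω v, f v (Function.update x v a) = 1) ∧
    (∀ x, p x = ∏ v, f v x)

/-- **d-separation implies conditional independence.**  If `v1` and `v2` are
d-separated by `Z ⊆ V \ {v1, v2}` in a DAG, then in any distribution that
factorizes according to the DAG, `X_{v1}` and `X_{v2}` are conditionally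
independent given `X_Z`. -/
theorem dsep_implies_condIndep [Fintype V] [DecidableEq V]
    (E : V → V → Prop) (hacyc : ∀ v, ¬ Relation.TransGen E v v)
    (Ω : V → Type*) [∀ v, Fintype (Ω v)]
    (p : (∀ v, Ω v) → ℝ) (hp0 : ∀ x, 0 ≤ p x) (hp1 : ∑ x : ∀ v, Ω v, p x = 1)
    (hfact : Factorizes E p)
    (v1 v2 : V) (Z : Set V) (hZ1 : v1 ∉ Z) (hZ2 : v2 ∉ Z)
    (hsep : DSep E Z v1 v2) :
    ∀ (a : Ω v1) (b : Ω v2) (z : ∀ v, Ω v),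
      pr p {x | x v1 = a ∧ x v2 = b ∧ ∀ w ∈ Z, x w = z w} *
        pr p {x | ∀ w ∈ Z, x w = z w} =
      pr p {x | x v1 = a ∧ ∀ w ∈ Z, x w = z w} *
        pr p {x | x v2 = b ∧ ∀ w ∈ Z, x w = z w} := by
  intro a b z
  classical
  obtain ⟨f, hf0, hfloc, hfker, hfprod⟩ := hfact
  have hKkey : ¬ Relation.ReflTransGen (Moral E Z v1 v2) v1 v2 := no_moral_conn hacyc hsep
  have hAn1 : v1 ∈ An E Z v1 v2 := ⟨v1, Or.inl rfl, Relation.ReflTransGen.refl⟩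
  have hAn2 : v2 ∈ An E Z v1 v2 := ⟨v2, Or.inr (Or.inl rfl), Relation.ReflTransGen.refl⟩
  have hAnZ : ∀ w ∈ Z, w ∈ An E Z v1 v2 :=
    fun w hw => ⟨w, Or.inr (Or.inr hw), Relation.ReflTransGen.refl⟩
  have hAnpar : ∀ u w, E u w → w ∈ An E Z v1 v2 → u ∈ An E Z v1 v2 := by
    rintro u w hE ⟨t, ht, hp⟩
    exact ⟨t, ht, Relation.ReflTransGen.head hE hp⟩
  have hconnZ : ∀ u, Relation.ReflTransGen (Moral E Z v1 v2) v1 u → u ∉ Z := by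
    intro u hu
    rcases Relation.ReflTransGen.cases_tail hu with rfl | ⟨c, _, hM'⟩
    · exact hZ1
    · exact hM'.2.2.2.1
  have hconnAn : ∀ u, Relation.ReflTransGen (Moral E Z v1 v2) v1 u → u ∈ An E Z v1 v2 := by
    intro u hu
    rcases Relation.ReflTransGen.cases_tail hu with rfl | ⟨c, _, hM'⟩
    · exact hAn1
    · exact hM'.2.1
  have hsymm : ∀ u w, Relation.ReflTransGen (Moral E Z v1 v2) u w →
      Relation.ReflTransGen (Moral E Z v1 v2) w u :=
    fun u w h => by
      haveI : Std.Symm (Moral E Z v1 v2) := ⟨fun x y hxy => moral_symm hxy⟩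
      exact (Relation.ReflTransGen.stdSymm (r := Moral E Z v1 v2)).symm u w h
  have claim1 : ∀ v, v ∈ An E Z v1 v2 →
      (∃ u, Relation.ReflTransGen (Moral E Z v1 v2) v1 u ∧ (u = v ∨ E u v)) →
      ∀ w, (w = v ∨ E w v) → w ∉ Z → Relation.ReflTransGen (Moral E Z v1 v2) v1 w := by
    rintro v hvAn ⟨u, hu, hus⟩ w hws hwZ
    have hwAn : w ∈ An E Z v1 v2 := by
      rcases hws with rfl | hE
      · exact hvAn
      · exact hAnpar _ _ hE hvAn
    have huZ : u ∉ Z := hconnZ u hu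
    have huAn : u ∈ An E Z v1 v2 := hconnAn u hu
    by_cases hvanz : v ∈ anZ E Z
    · by_cases huw : u = w
      · exact huw ▸ hu
      · refine hu.tail ⟨huAn, hwAn, huZ, hwZ, ?_⟩
        rcases hus with rfl | hEu
        · rcases hws with rfl | hEw
          · exact absurd rfl huw
          · exact Or.inl (Or.inr hEw)
        · rcases hws with rfl | hEw
          · exact Or.inl (Or.inl hEu)
          · exact Or.inr ⟨v, hEu, hEw, hvanz⟩
    · obtain ⟨t, htt, hpath⟩ := hvAn
      have hvZ : v ∉ Z := fun h => hvanz ⟨v, Relation.ReflTransGen.refl, h⟩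
      have hvAn' : v ∈ An E Z v1 v2 := ⟨t, htt, hpath⟩
      have hZfree : ∀ x, Relation.ReflTransGen E v x → x ∉ Z :=
        fun x hx hxZ => hvanz ⟨x, hx, hxZ⟩
      have htv : t = v1 ∨ t = v2 := by
        rcases htt with h | h | h
        · exact Or.inl h
        · exact Or.inr h
        · exact absurd ⟨t, hpath, h⟩ hvanz
      obtain ⟨l, hlc, hlh, hll, hlmem⟩ := pathList hpath
      have hmemAn : ∀ x ∈ l, x ∈ An E Z v1 v2 ∧ x ∉ Z := by
        intro x hx
        exact ⟨⟨t, htt, (hlmem x hx).2⟩, hZfree x (hlmem x hx).1⟩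
      have hvt : Relation.ReflTransGen (Moral E Z v1 v2) v t :=
        moral_chain_of_dirpath l hlc hmemAn v t hlh hll
      have hut : Relation.ReflTransGen (Moral E Z v1 v2) u t := by
        rcases hus with rfl | hEu
        · exact hvt
        · exact Relation.ReflTransGen.head ⟨huAn, hvAn', huZ, hvZ, Or.inl (Or.inl hEu)⟩ hvt
      have hwt : Relation.ReflTransGen (Moral E Z v1 v2) w t := by
        rcases hws with rfl | hEw
        · exact hvt
        · exact Relation.ReflTransGen.head ⟨hwAn, hvAn', hwZ, hvZ, Or.inl (Or.inl hEw)⟩ hvt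
      rcases htv with rfl | rfl
      · exact hsymm _ _ hwt
      · exact absurd (hu.trans hut) hKkey
  -- the side predicates and the three blocks of vertices
  set SideTouch : V → Prop :=
    fun v => ∃ u, Relation.ReflTransGen (Moral E Z v1 v2) v1 u ∧ (u = v ∨ E u v) with hSideTouch
  set pA : V → Prop :=
    fun v => Relation.ReflTransGen (Moral E Z v1 v2) v1 v ∨ v ∈ Z with hpA
  set 𝒜 : Finset V :=
    Finset.univ.filter (fun v => v ∈ An E Z v1 v2 ∧ SideTouch v) with h𝒜
  set ℬ : Finset V :=
    Finset.univ.filter (fun v => v ∈ An E Z v1 v2 ∧ ¬ SideTouch v) with hℬ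
  set 𝒞 : Finset V := Finset.univ.filter (fun v => v ∉ An E Z v1 v2) with h𝒞
  have h𝒜mem : ∀ v, v ∈ 𝒜 ↔ (v ∈ An E Z v1 v2 ∧ SideTouch v) := by
    intro v; rw [h𝒜]; simp
  have hℬmem : ∀ v, v ∈ ℬ ↔ (v ∈ An E Z v1 v2 ∧ ¬ SideTouch v) := by
    intro v; rw [hℬ]; simp
  have h𝒞mem : ∀ v, v ∈ 𝒞 ↔ v ∉ An E Z v1 v2 := by
    intro v; rw [h𝒞]; simp
  have hprodsplit : ∀ F : V → ℝ,
      ∏ v, F v = ((∏ v ∈ 𝒜, F v) * (∏ v ∈ ℬ, F v)) * (∏ v ∈ 𝒞, F v) := by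
    intro F
    rw [← Finset.prod_filter_mul_prod_filter_not Finset.univ (fun v => v ∈ An E Z v1 v2) F]
    congr 1
    rw [← Finset.prod_filter_mul_prod_filter_not
      (Finset.univ.filter (fun v => v ∈ An E Z v1 v2)) (fun v => SideTouch v) F,
      Finset.filter_filter, Finset.filter_filter]
  -- dependence of kernels f v for v ∈ An on An-coordinates only
  have hfinv : ∀ w, w ∈ An E Z v1 v2 → ∀ (x : ∀ v, Ω v) (v : V), v ∉ An E Z v1 v2 →
      ∀ α : Ω v, f w (Function.update x v α) = f w x := by
    intro w hwAn x v hv α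
    refine hfloc w _ _ ?_ ?_
    · exact Function.update_of_ne (fun h => hv (by rw [← h]; exact hwAn)) _ _
    · intro u hu
      exact Function.update_of_ne (fun h => hv (by rw [← h]; exact hAnpar u w hu hwAn)) _ _
  -- the auxiliary functions
  set ov : (∀ v, Ω v) → (∀ v, Ω v) := fun x v => if v ∈ Z then z v else x v with hov
  set ζ : (∀ v, Ω v) → ℝ := fun x => ind (∀ v ∈ 𝒞, x v = z v) with hζ
  set F1 : (∀ v, Ω v) → ℝ :=
    fun x => ind (x v1 = a ∧ ∀ w ∈ Z, x w = z w) * ∏ v ∈ 𝒜, f v x with hF1d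
  set F2 : (∀ v, Ω v) → ℝ :=
    fun x => ind (∀ w ∈ Z, x w = z w) * ∏ v ∈ 𝒜, f v x with hF2d
  set G1 : (∀ v, Ω v) → ℝ :=
    fun x => ind (x v2 = b) * ((∏ v ∈ ℬ, f v (ov x)) * ζ x) with hG1d
  set G2 : (∀ v, Ω v) → ℝ := fun x => (∏ v ∈ ℬ, f v (ov x)) * ζ x with hG2d
  -- basic coordinate memberships
  have hpAv1 : pA v1 := Or.inl Relation.ReflTransGen.refl
  have hpAZ : ∀ w ∈ Z, pA w := fun w hw => Or.inr hw
  have hnpAv2 : ¬ pA v2 := by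
    rintro (h | h)
    · exact hKkey h
    · exact hZ2 h
  have hpA𝒜 : ∀ v ∈ 𝒜, ∀ w, (w = v ∨ E w v) → pA w := by
    intro v hv w hws
    obtain ⟨hvAn, hvTouch⟩ := (h𝒜mem v).1 hv
    by_cases hwZ : w ∈ Z
    · exact Or.inr hwZ
    · exact Or.inl (claim1 v hvAn hvTouch w hws hwZ)
  have hnpAℬ : ∀ v ∈ ℬ, ∀ w, (w = v ∨ E w v) → w ∉ Z → ¬ pA w := by
    intro v hv w hws hwZ hpw
    obtain ⟨hvAn, hvTouch⟩ := (hℬmem v).1 hv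
    rcases hpw with h | h
    · exact hvTouch ⟨w, h, hws⟩
    · exact hwZ h
  have hnpA𝒞 : ∀ v ∈ 𝒞, ¬ pA v := by
    intro v hv hpv
    have hvAn : v ∉ An E Z v1 v2 := (h𝒞mem v).1 hv
    rcases hpv with h | h
    · exact hvAn (hconnAn v h)
    · exact hvAn (hAnZ v h)
  -- dependence of the factors
  have hZciff : ∀ x y : ∀ v, Ω v, (∀ v, pA v → x v = y v) →
      ((∀ w ∈ Z, x w = z w) ↔ (∀ w ∈ Z, y w = z w)) := by
    intro x y hxy
    constructor <;> intro h w hw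
    · rw [← hxy w (hpAZ w hw)]; exact h w hw
    · rw [hxy w (hpAZ w hw)]; exact h w hw
  have hprodA : ∀ x y : ∀ v, Ω v, (∀ v, pA v → x v = y v) →
      ∏ v ∈ 𝒜, f v x = ∏ v ∈ 𝒜, f v y := by
    intro x y hxy
    apply Finset.prod_congr rfl
    intro v hv
    exact hfloc v _ _ (hxy v (hpA𝒜 v hv v (Or.inl rfl)))
      (fun w hw => hxy w (hpA𝒜 v hv w (Or.inr hw)))
  have hF1dep : ∀ x y : ∀ v, Ω v, (∀ v, pA v → x v = y v) → F1 x = F1 y := by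
    intro x y hxy
    simp only [hF1d]
    rw [hprodA x y hxy, ind_congr (and_congr (by rw [hxy v1 hpAv1]) (hZciff x y hxy))]
  have hF2dep : ∀ x y : ∀ v, Ω v, (∀ v, pA v → x v = y v) → F2 x = F2 y := by
    intro x y hxy
    simp only [hF2d]
    rw [hprodA x y hxy, ind_congr (hZciff x y hxy)]
  have hGcommon : ∀ x y : ∀ v, Ω v, (∀ v, ¬ pA v → x v = y v) →
      ((∏ v ∈ ℬ, f v (ov x)) * ζ x) = ((∏ v ∈ ℬ, f v (ov y)) * ζ y) := by
    intro x y hxy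
    have hovc : ∀ w, ¬ pA w → ov x w = ov y w := by
      intro w hw
      simp only [hov]
      by_cases hwZ : w ∈ Z
      · simp [hwZ]
      · simp only [if_neg hwZ]
        exact hxy w hw
    have hovZ : ∀ w ∈ Z, ov x w = ov y w := by
      intro w hw
      simp only [hov]; simp [hw]
    have hprod : ∏ v ∈ ℬ, f v (ov x) = ∏ v ∈ ℬ, f v (ov y) := by
      apply Finset.prod_congr rfl
      intro v hv
      refine hfloc v _ _ ?_ ?_
      · by_cases hvZ : v ∈ Z
        · exact hovZ v hvZ
        · exact hovc v (hnpAℬ v hv v (Or.inl rfl) hvZ)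
      · intro w hw
        by_cases hwZ : w ∈ Z
        · exact hovZ w hwZ
        · exact hovc w (hnpAℬ v hv w (Or.inr hw) hwZ)
    have hzeta : ζ x = ζ y := by
      simp only [hζ]
      apply ind_congr
      constructor <;> intro h v hv
      · rw [← hxy v (hnpA𝒞 v hv)]; exact h v hv
      · rw [hxy v (hnpA𝒞 v hv)]; exact h v hv
    rw [hprod, hzeta]
  have hG1dep : ∀ x y : ∀ v, Ω v, (∀ v, ¬ pA v → x v = y v) → G1 x = G1 y := by
    intro x y hxy
    simp only [hG1d]
    rw [hGcommon x y hxy, ind_congr (by rw [hxy v2 hnpAv2])]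
  have hG2dep : ∀ x y : ∀ v, Ω v, (∀ v, ¬ pA v → x v = y v) → G2 x = G2 y :=
    fun x y hxy => hGcommon x y hxy
  -- the master computation for each of the four probabilities
  have main : ∀ (C : (∀ v, Ω v) → Prop) (FF GG : (∀ v, Ω v) → ℝ),
      (∀ (x : ∀ v, Ω v) (v : V), v ∈ 𝒞 → ∀ α : Ω v, (C (Function.update x v α) ↔ C x)) →
      (∀ x, (ind (C x) * ((∏ v ∈ 𝒜, f v x) * (∏ v ∈ ℬ, f v x))) * ζ x = FF x * GG x) →
      (∀ x y : ∀ v, Ω v, (∀ v, pA v → x v = y v) → FF x = FF y) →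
      (∀ x y : ∀ v, Ω v, (∀ v, ¬ pA v → x v = y v) → GG x = GG y) →
      pr p {x | C x} =
        (∑ x : ∀ v, Ω v, FF x * ind (∀ v, ¬ pA v → x v = z v)) *
        (∑ x : ∀ v, Ω v, GG x * ind (∀ v, pA v → x v = z v)) := by
    intro C FF GG hCinv hpt hFFdep hGGdep
    have step1 : pr p {x | C x} =
        ∑ x : ∀ v, Ω v,
          (ind (C x) * ((∏ v ∈ 𝒜, f v x) * (∏ v ∈ ℬ, f v x))) * ∏ v ∈ 𝒞, f v x := by
      unfold pr
      apply Finset.sum_congr rfl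
      intro x _
      rw [Set.indicator_apply]
      simp only [Set.mem_setOf_eq]
      by_cases hC : C x
      · rw [if_pos hC, ind_pos hC, hfprod x, hprodsplit (fun v => f v x)]
        ring
      · rw [if_neg hC, ind_neg hC]
        ring
    have step2 : ∑ x : ∀ v, Ω v,
          (ind (C x) * ((∏ v ∈ 𝒜, f v x) * (∏ v ∈ ℬ, f v x))) * ∏ v ∈ 𝒞, f v x =
        ∑ x : ∀ v, Ω v,
          (ind (C x) * ((∏ v ∈ 𝒜, f v x) * (∏ v ∈ ℬ, f v x))) * ind (∀ v ∈ 𝒞, x v = z v) := by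
      refine sum_out hacyc f hfloc hfker z 𝒞
        (fun x => ind (C x) * ((∏ v ∈ 𝒜, f v x) * (∏ v ∈ ℬ, f v x))) ?_
      intro x v hv α
      have hvnAn : v ∉ An E Z v1 v2 := (h𝒞mem v).1 hv
      show ind (C (Function.update x v α)) *
          ((∏ w ∈ 𝒜, f w (Function.update x v α)) * (∏ w ∈ ℬ, f w (Function.update x v α))) =
        ind (C x) * ((∏ w ∈ 𝒜, f w x) * (∏ w ∈ ℬ, f w x))
      have hpA' : ∏ w ∈ 𝒜, f w (Function.update x v α) = ∏ w ∈ 𝒜, f w x := by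
        apply Finset.prod_congr rfl
        intro w hw
        exact hfinv w ((h𝒜mem w).1 hw).1 x v hvnAn α
      have hpB' : ∏ w ∈ ℬ, f w (Function.update x v α) = ∏ w ∈ ℬ, f w x := by
        apply Finset.prod_congr rfl
        intro w hw
        exact hfinv w ((hℬmem w).1 hw).1 x v hvnAn α
      rw [hpA', hpB', ind_congr (hCinv x v hv α)]
    have step3 : ∑ x : ∀ v, Ω v,
          (ind (C x) * ((∏ v ∈ 𝒜, f v x) * (∏ v ∈ ℬ, f v x))) * ind (∀ v ∈ 𝒞, x v = z v) =
        ∑ x : ∀ v, Ω v, FF x * GG x := by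
      apply Finset.sum_congr rfl
      intro x _
      simpa only [hζ] using hpt x
    rw [step1, step2, step3]
    exact split_sum pA FF GG hFFdep hGGdep z
  -- the update-invariance of the four conditions
  have hupdeq : ∀ (x : ∀ v, Ω v) (v : V), v ∉ An E Z v1 v2 → ∀ (α : Ω v) (w : V),
      w ∈ An E Z v1 v2 → Function.update x v α w = x w := by
    intro x v hv α w hw
    exact Function.update_of_ne (fun h => hv (by rw [← h]; exact hw)) _ _
  -- pointwise identities
  have hptZ : ∀ x : ∀ v, Ω v, (∀ w ∈ Z, x w = z w) → ov x = x := by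
    intro x hx
    funext v
    simp only [hov]
    by_cases hvZ : v ∈ Z
    · simp only [if_pos hvZ]
      exact (hx v hvZ).symm
    · simp only [if_neg hvZ]
  have hpt1 : ∀ x : ∀ v, Ω v,
      (ind (x v1 = a ∧ x v2 = b ∧ ∀ w ∈ Z, x w = z w) *
        ((∏ v ∈ 𝒜, f v x) * (∏ v ∈ ℬ, f v x))) * ζ x = F1 x * G1 x := by
    intro x
    simp only [hF1d, hG1d]
    rw [ind_and, ind_and, ind_and]
    by_cases hzc : ∀ w ∈ Z, x w = z w
    · rw [hptZ x hzc]
      ring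
    · rw [ind_neg hzc]
      ring
  have hpt2 : ∀ x : ∀ v, Ω v,
      (ind (∀ w ∈ Z, x w = z w) *
        ((∏ v ∈ 𝒜, f v x) * (∏ v ∈ ℬ, f v x))) * ζ x = F2 x * G2 x := by
    intro x
    simp only [hF2d, hG2d]
    by_cases hzc : ∀ w ∈ Z, x w = z w
    · rw [hptZ x hzc]
      ring
    · rw [ind_neg hzc]
      ring
  have hpt3 : ∀ x : ∀ v, Ω v,
      (ind (x v1 = a ∧ ∀ w ∈ Z, x w = z w) *
        ((∏ v ∈ 𝒜, f v x) * (∏ v ∈ ℬ, f v x))) * ζ x = F1 x * G2 x := by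
    intro x
    simp only [hF1d, hG2d]
    by_cases hzc : ∀ w ∈ Z, x w = z w
    · rw [hptZ x hzc]
      ring
    · rw [ind_and, ind_neg hzc]
      ring
  have hpt4 : ∀ x : ∀ v, Ω v,
      (ind (x v2 = b ∧ ∀ w ∈ Z, x w = z w) *
        ((∏ v ∈ 𝒜, f v x) * (∏ v ∈ ℬ, f v x))) * ζ x = F2 x * G1 x := by
    intro x
    simp only [hF2d, hG1d]
    rw [ind_and]
    by_cases hzc : ∀ w ∈ Z, x w = z w
    · rw [hptZ x hzc]
      ring
    · rw [ind_neg hzc]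
      ring
  -- invariance of conditions under updates at non-ancestors
  have hCinvZ : ∀ (x : ∀ v, Ω v) (v : V), v ∈ 𝒞 → ∀ α : Ω v,
      ((∀ w ∈ Z, (Function.update x v α) w = z w) ↔ (∀ w ∈ Z, x w = z w)) := by
    intro x v hv α
    have hvnAn := (h𝒞mem v).1 hv
    constructor <;> intro h w hw
    · rw [← hupdeq x v hvnAn α w (hAnZ w hw)]; exact h w hw
    · rw [hupdeq x v hvnAn α w (hAnZ w hw)]; exact h w hw
  have hCinv1 : ∀ (x : ∀ v, Ω v) (v : V), v ∈ 𝒞 → ∀ α : Ω v,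
      (((Function.update x v α) v1 = a ∧ (Function.update x v α) v2 = b ∧
        ∀ w ∈ Z, (Function.update x v α) w = z w) ↔
      (x v1 = a ∧ x v2 = b ∧ ∀ w ∈ Z, x w = z w)) := by
    intro x v hv α
    have hvnAn := (h𝒞mem v).1 hv
    rw [hupdeq x v hvnAn α v1 hAn1, hupdeq x v hvnAn α v2 hAn2]
    exact and_congr Iff.rfl (and_congr Iff.rfl (hCinvZ x v hv α))
  have hCinv3 : ∀ (x : ∀ v, Ω v) (v : V), v ∈ 𝒞 → ∀ α : Ω v,
      (((Function.update x v α) v1 = a ∧ ∀ w ∈ Z, (Function.update x v α) w = z w) ↔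
      (x v1 = a ∧ ∀ w ∈ Z, x w = z w)) := by
    intro x v hv α
    have hvnAn := (h𝒞mem v).1 hv
    rw [hupdeq x v hvnAn α v1 hAn1]
    exact and_congr Iff.rfl (hCinvZ x v hv α)
  have hCinv4 : ∀ (x : ∀ v, Ω v) (v : V), v ∈ 𝒞 → ∀ α : Ω v,
      (((Function.update x v α) v2 = b ∧ ∀ w ∈ Z, (Function.update x v α) w = z w) ↔
      (x v2 = b ∧ ∀ w ∈ Z, x w = z w)) := by
    intro x v hv α
    have hvnAn := (h𝒞mem v).1 hv
    rw [hupdeq x v hvnAn α v2 hAn2]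
    exact and_congr Iff.rfl (hCinvZ x v hv α)
  have e1 : pr p {x | x v1 = a ∧ x v2 = b ∧ ∀ w ∈ Z, x w = z w} =
      (∑ x : ∀ v, Ω v, F1 x * ind (∀ v, ¬ pA v → x v = z v)) *
      (∑ x : ∀ v, Ω v, G1 x * ind (∀ v, pA v → x v = z v)) :=
    main (fun x => x v1 = a ∧ x v2 = b ∧ ∀ w ∈ Z, x w = z w) F1 G1 hCinv1 hpt1 hF1dep hG1dep
  have e2 : pr p {x | ∀ w ∈ Z, x w = z w} =
      (∑ x : ∀ v, Ω v, F2 x * ind (∀ v, ¬ pA v → x v = z v)) *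
      (∑ x : ∀ v, Ω v, G2 x * ind (∀ v, pA v → x v = z v)) :=
    main (fun x => ∀ w ∈ Z, x w = z w) F2 G2 hCinvZ hpt2 hF2dep hG2dep
  have e3 : pr p {x | x v1 = a ∧ ∀ w ∈ Z, x w = z w} =
      (∑ x : ∀ v, Ω v, F1 x * ind (∀ v, ¬ pA v → x v = z v)) *
      (∑ x : ∀ v, Ω v, G2 x * ind (∀ v, pA v → x v = z v)) :=
    main (fun x => x v1 = a ∧ ∀ w ∈ Z, x w = z w) F1 G2 hCinv3 hpt3 hF1dep hG2dep
  have e4 : pr p {x | x v2 = b ∧ ∀ w ∈ Z, x w = z w} =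
      (∑ x : ∀ v, Ω v, F2 x * ind (∀ v, ¬ pA v → x v = z v)) *
      (∑ x : ∀ v, Ω v, G1 x * ind (∀ v, pA v → x v = z v)) :=
    main (fun x => x v2 = b ∧ ∀ w ∈ Z, x w = z w) F2 G1 hCinv4 hpt4 hF2dep hG1dep
  rw [e1, e2, e3, e4]
  ring


end Stmt2
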